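/- arXiv:2411.06250 — 2 statements merged into one kernel-verified Lean document; each statement's English description precedes it below -/
import Mathlib

section
/- Let n ≥ 3 be an integer, x ≥ 0 a real number, and a_0(n), a_1(n) real sequences. Then V_{n,1}(e_1; x) = (2a_0(n) − a_1(n))x + (1/(n−2))·(1+2x)(3a_0(n) − 2a_1(n)), where e_1(t) = t (in particular the defining series and integrals converge absolutely). -/
open MeasureTheory Filter Topology

/-- Baskakov basis function `p_{n,k}(x) = C(n+k-1, k) x^k / (1+x)^{n+k}`. -/
noncomputable def bask (n k : ℕ) (x : ℝ) : ℝ :=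
  (Nat.choose (n + k - 1) k : ℝ) * x ^ k / (1 + x) ^ (n + k)

/-- Modified basis `p^1_{n,k}(x) = a(x,n) p_{n+1,k}(x) + b(x,n) p_{n+1,k-1}(x)`,
with `p_{n+1,-1} = 0`. -/
noncomputable def p1 (a0 a1 : ℕ → ℝ) (n k : ℕ) (x : ℝ) : ℝ :=
  (a0 n + a1 n * x) * bask (n + 1) k x
    + (a0 n - a1 n * (1 + x)) * (if k = 0 then 0 else bask (n + 1) (k - 1) x)

/-- First-order modified Baskakov–Durrmeyer operator. -/
noncomputable def V1 (a0 a1 : ℕ → ℝ) (n : ℕ) (f : ℝ → ℝ) (x : ℝ) : ℝ :=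
  ((n : ℝ) - 1) * ∑' k : ℕ, p1 a0 a1 n k x * ∫ t in Set.Ioi (0 : ℝ), bask n k t * f t

section aux
open Set

lemma tendsto_pow_inv (b : ℕ) (hb : 1 ≤ b) :
    Tendsto (fun t : ℝ => ((1 + t) ^ b)⁻¹) atTop (𝓝 0) := by
  have h : Tendsto (fun t : ℝ => (1 + t) ^ b) atTop atTop :=
    (tendsto_pow_atTop (by omega : b ≠ 0)).comp (tendsto_atTop_add_const_left _ 1 tendsto_id)
  exact h.inv_tendsto_atTop

-- derivative for base case
lemma base_deriv (c : ℕ) (t : ℝ) (ht : (0:ℝ) ≤ t) :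
    HasDerivAt (fun t : ℝ => -(((c:ℝ) + 1)⁻¹ * ((1 + t) ^ (c + 1))⁻¹))
      (((1 + t) ^ (c + 2))⁻¹) t := by
  have h1 : (0:ℝ) < 1 + t := by linarith
  have hpow : HasDerivAt (fun t : ℝ => (1 + t) ^ (c + 1))
      (((c:ℝ) + 1) * (1 + t) ^ c) t := by
    have hb : HasDerivAt (fun t : ℝ => 1 + t) 1 t := (hasDerivAt_id t).const_add 1
    have := hb.fun_pow (c + 1)
    simpa using this
  have hinv := hpow.inv (by positivity)
  have := (hinv.const_mul (((c:ℝ) + 1)⁻¹)).neg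
  refine this.congr_deriv ?_
  have hc : ((c:ℝ) + 1) ≠ 0 := by positivity
  field_simp
  ring

lemma base_tendsto (c : ℕ) :
    Tendsto (fun t : ℝ => -(((c:ℝ) + 1)⁻¹ * ((1 + t) ^ (c + 1))⁻¹)) atTop (𝓝 0) := by
  have := ((tendsto_pow_inv (c + 1) (by omega)).const_mul (((c:ℝ) + 1)⁻¹)).neg
  simpa using this

lemma base_int (c : ℕ) :
    IntegrableOn (fun t : ℝ => ((1 + t) ^ (c + 2))⁻¹) (Ioi 0) :=
  integrableOn_Ioi_deriv_of_nonneg' (fun t ht => base_deriv c t ht)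
    (fun t ht => by
      have h : (0:ℝ) < 1 + t := by have := ht.out; linarith
      positivity) (base_tendsto c)

lemma base_val (c : ℕ) :
    ∫ t in Ioi (0:ℝ), ((1 + t) ^ (c + 2))⁻¹ = ((c:ℝ) + 1)⁻¹ := by
  rw [integral_Ioi_of_hasDerivAt_of_nonneg' (fun t ht => base_deriv c t ht)
    (fun t ht => by
      have h : (0:ℝ) < 1 + t := by have := ht.out; linarith
      positivity) (base_tendsto c)]
  norm_num



lemma meas_aux (a b : ℕ) : AEStronglyMeasurable (fun t : ℝ => t ^ a * ((1 + t) ^ b)⁻¹)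
    (volume.restrict (Ioi 0)) :=
  ((measurable_id.pow_const a).mul
    (((measurable_const.add measurable_id).pow_const b).inv)).aestronglyMeasurable

lemma tendsto_inv_one_add : Tendsto (fun t : ℝ => (1 + t)⁻¹) atTop (𝓝 0) :=
  (tendsto_atTop_add_const_left _ 1 tendsto_id).inv_tendsto_atTop

lemma tendsto_g (a b : ℕ) (hab : a < b) :
    Tendsto (fun t : ℝ => t ^ a * ((1 + t) ^ b)⁻¹) atTop (𝓝 0) := by
  apply squeeze_zero' (g := fun t : ℝ => (1 + t)⁻¹)
  · filter_upwards [eventually_ge_atTop (0 : ℝ)] with t ht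
    positivity
  · filter_upwards [eventually_ge_atTop (0 : ℝ)] with t ht
    have h1 : (0:ℝ) < 1 + t := by linarith
    have h2 : t ^ a ≤ (1 + t) ^ a := pow_le_pow_left₀ ht (by linarith) a
    have h3 : t ^ a * ((1 + t) ^ b)⁻¹ ≤ (1 + t) ^ a * ((1 + t) ^ b)⁻¹ :=
      mul_le_mul_of_nonneg_right h2 (by positivity)
    refine h3.trans ?_
    have hb : b = a + (b - a) := by omega
    rw [hb, pow_add, mul_inv, ← mul_assoc, mul_inv_cancel₀ (by positivity), one_mul]
    have h4 : (1 + t) ^ 1 ≤ (1 + t) ^ (b - a) := pow_le_pow_right₀ (by linarith) (by omega)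
    rw [pow_one] at h4
    exact inv_anti₀ h1 h4
  · exact tendsto_inv_one_add

lemma J_int (a c : ℕ) :
    IntegrableOn (fun t : ℝ => t ^ a * ((1 + t) ^ (a + c + 2))⁻¹) (Ioi 0) := by
  refine Integrable.mono' (base_int c) (meas_aux a (a + c + 2)) ?_
  filter_upwards [ae_restrict_mem measurableSet_Ioi] with t ht
  have ht0 : (0:ℝ) < t := ht.out
  have h1 : (0:ℝ) < 1 + t := by linarith
  rw [Real.norm_eq_abs, abs_of_nonneg (by positivity)]
  have h2 : t ^ a ≤ (1 + t) ^ a := pow_le_pow_left₀ ht0.le (by linarith) a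
  calc t ^ a * ((1 + t) ^ (a + c + 2))⁻¹
      ≤ (1 + t) ^ a * ((1 + t) ^ (a + c + 2))⁻¹ :=
        mul_le_mul_of_nonneg_right h2 (by positivity)
    _ = ((1 + t) ^ (c + 2))⁻¹ := by
        rw [show a + c + 2 = a + (c + 2) by omega, pow_add, mul_inv, ← mul_assoc,
          mul_inv_cancel₀ (by positivity), one_mul]


lemma step_deriv (a d : ℕ) (t : ℝ) (h1 : (0:ℝ) < 1 + t) :
    HasDerivAt (fun t : ℝ => t ^ (a + 1) * ((1 + t) ^ (d + 1))⁻¹)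
      (((a:ℝ) + 1) * (t ^ a * ((1 + t) ^ (d + 1))⁻¹)
        - ((d:ℝ) + 1) * (t ^ (a + 1) * ((1 + t) ^ (d + 2))⁻¹)) t := by
  have hp : HasDerivAt (fun t : ℝ => t ^ (a + 1)) (((a:ℝ) + 1) * t ^ a) t := by
    simpa using hasDerivAt_pow (a + 1) t
  have hq : HasDerivAt (fun t : ℝ => (1 + t) ^ (d + 1)) (((d:ℝ) + 1) * (1 + t) ^ d) t := by
    have hbase : HasDerivAt (fun t : ℝ => 1 + t) 1 t := (hasDerivAt_id t).const_add 1
    simpa using hbase.fun_pow (d + 1)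
  have hqi := hq.fun_inv (by positivity)
  have h := hp.mul hqi
  refine h.congr_deriv ?_
  have h2 : (1 + t) ^ (d + 1) ≠ 0 := by positivity
  have h3 : (1 + t) ^ d ≠ 0 := by positivity
  have h4 : (1 + t) ≠ 0 := by positivity
  field_simp
  ring

lemma J_val (a c : ℕ) :
    ∫ t in Ioi (0:ℝ), t ^ a * ((1 + t) ^ (a + c + 2))⁻¹
      = (a.factorial : ℝ) * c.factorial / (a + c + 1).factorial := by
  induction a with
  | zero =>
    simp only [pow_zero, one_mul, zero_add]
    rw [base_val c]
    rw [Nat.factorial_zero]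
    rw [show c + 1 = c + 1 from rfl]
    rw [Nat.factorial_succ]
    push_cast
    rw [eq_div_iff (by positivity)]
    field_simp
  | succ a ih =>
    -- integration by parts
    have hb : a + c + 2 = a + c + 2 := rfl
    set b := a + c + 2 with hbdef
    have key : ∫ t in Ioi (0:ℝ),
        (((a:ℝ) + 1) * (t ^ a * ((1 + t) ^ b)⁻¹)
          - ((b:ℝ)) * (t ^ (a + 1) * ((1 + t) ^ (b + 1))⁻¹)) = 0 := by
      have hderiv : ∀ t ∈ Ici (0:ℝ),
          HasDerivAt (fun t : ℝ => t ^ (a + 1) * ((1 + t) ^ b)⁻¹)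
            (((a:ℝ) + 1) * (t ^ a * ((1 + t) ^ b)⁻¹)
              - ((b:ℝ)) * (t ^ (a + 1) * ((1 + t) ^ (b + 1))⁻¹)) t := by
        intro t ht
        have h1 : (0:ℝ) < 1 + t := by have := ht.out; linarith
        have := step_deriv a (a + c + 1) t h1
        rw [show a + c + 1 + 1 = b by omega, show a + c + 1 + 2 = b + 1 by omega] at this
        convert this using 2
        · push_cast [show b = a + c + 1 + 1 by omega]; ring
      have hint : IntegrableOn (fun t : ℝ =>
          ((a:ℝ) + 1) * (t ^ a * ((1 + t) ^ b)⁻¹)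
            - ((b:ℝ)) * (t ^ (a + 1) * ((1 + t) ^ (b + 1))⁻¹)) (Ioi 0) := by
        have h1 := (J_int a c).const_mul ((a:ℝ) + 1)
        have h2 := (J_int (a + 1) c).const_mul ((b:ℝ))
        rw [show a + 1 + c + 2 = b + 1 by omega] at h2
        exact h1.sub h2
      have htend : Tendsto (fun t : ℝ => t ^ (a + 1) * ((1 + t) ^ b)⁻¹) atTop (𝓝 0) :=
        tendsto_g (a + 1) b (by omega)
      have := integral_Ioi_of_hasDerivAt_of_tendsto' hderiv hint htend
      simpa using this
    have h1 := (J_int a c).const_mul ((a:ℝ) + 1)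
    have h2 := (J_int (a + 1) c).const_mul ((b:ℝ))
    rw [show a + 1 + c + 2 = b + 1 by omega] at h2
    rw [integral_sub h1 h2, integral_const_mul, integral_const_mul, ih, sub_eq_zero] at key
    have hb0 : ((b:ℝ)) ≠ 0 := by positivity
    have : ∫ t in Ioi (0:ℝ), t ^ (a + 1) * ((1 + t) ^ (b + 1))⁻¹
        = ((a:ℝ) + 1) * ((a.factorial : ℝ) * c.factorial / (a + c + 1).factorial) / b := by
      field_simp at key ⊢
      linarith [key]
    rw [show a + 1 + c + 2 = b + 1 by omega, this]
    rw [show a + 1 + c + 1 = b by omega]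
    have hfb : (b.factorial : ℝ) = (b : ℝ) * (a + c + 1).factorial := by
      rw [hbdef, show a + c + 2 = (a + c + 1) + 1 by omega, Nat.factorial_succ]
      push_cast; ring
    rw [Nat.factorial_succ a, hfb]
    have h5 : ((a + c + 1).factorial : ℝ) ≠ 0 := by positivity
    push_cast
    field_simp

-- rewriting the integrand
lemma bask_fun_eq (m k : ℕ) : (fun t : ℝ => bask (m + 3) k t * t)
    = fun t : ℝ => (((m + 2 + k).choose k : ℝ)) * (t ^ (k + 1) * ((1 + t) ^ (k + 1 + m + 2))⁻¹) := by
  funext t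
  unfold bask
  rw [show m + 3 + k - 1 = m + 2 + k by omega, show m + 3 + k = k + 1 + m + 2 by omega,
    div_eq_mul_inv]
  ring

lemma bask_integrable (m k : ℕ) :
    IntegrableOn (fun t : ℝ => bask (m + 3) k t * t) (Ioi 0) := by
  rw [bask_fun_eq]
  exact (J_int (k + 1) m).const_mul _

lemma bask_integral (m k : ℕ) :
    ∫ t in Ioi (0:ℝ), bask (m + 3) k t * t
      = ((k : ℝ) + 1) / (((m : ℝ) + 1) * ((m : ℝ) + 2)) := by
  rw [bask_fun_eq, integral_const_mul, J_val (k + 1) m]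
  have hnat : (m + 2 + k).choose k * ((k + 1).factorial * m.factorial) * ((m + 1) * (m + 2))
      = (k + 1) * (m + 2 + k).factorial := by
    have hch := Nat.choose_mul_factorial_mul_factorial (show k ≤ m + 2 + k by omega)
    rw [show m + 2 + k - k = m + 2 by omega] at hch
    have h1 : m.factorial * ((m + 1) * (m + 2)) = (m + 2).factorial := by
      rw [show m + 2 = (m + 1) + 1 by omega, Nat.factorial_succ (m + 1), Nat.factorial_succ m]
      ring
    calc (m + 2 + k).choose k * ((k + 1).factorial * m.factorial) * ((m + 1) * (m + 2))
        = (k + 1) * ((m + 2 + k).choose k * k.factorial * (m.factorial * ((m + 1) * (m + 2)))) := by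
          rw [Nat.factorial_succ k]; ring
      _ = (k + 1) * ((m + 2 + k).choose k * k.factorial * (m + 2).factorial) := by rw [h1]
      _ = (k + 1) * (m + 2 + k).factorial := by rw [hch]
  rw [show k + 1 + m + 1 = m + 2 + k by omega, mul_div_assoc']
  rw [div_eq_div_iff (by positivity) (by positivity)]
  exact_mod_cast hnat

section series

variable {m : ℕ} {x : ℝ} (hx : 0 ≤ x)
include hx

lemma bask_eq (M k : ℕ) :
    bask (M + 1) k x = ((1 + x) ^ (M + 1))⁻¹ * (((k + M).choose M : ℝ) * (x / (1 + x)) ^ k) := by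
  have h1 : (0:ℝ) < 1 + x := by linarith
  unfold bask
  rw [show M + 1 + k - 1 = k + M by omega, Nat.choose_symm_add, div_pow, pow_add]
  field_simp

lemma hr_norm : ‖x / (1 + x)‖ < 1 := by
  have h1 : (0:ℝ) < 1 + x := by linarith
  rw [Real.norm_eq_abs, abs_of_nonneg (by positivity), div_lt_one h1]
  linarith

lemma hasSum_bask (M : ℕ) : HasSum (fun k => bask (M + 1) k x) 1 := by
  have h1 : (0:ℝ) < 1 + x := by linarith
  have H := (hasSum_choose_mul_geometric_of_norm_lt_one (𝕜 := ℝ) M (hr_norm hx)).mul_left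
    (((1 + x) ^ (M + 1))⁻¹)
  have hsub : (1 : ℝ) - x / (1 + x) = (1 + x)⁻¹ := by field_simp; ring
  rw [hsub, inv_pow, one_div, inv_inv, inv_mul_cancel₀ (by positivity)] at H
  exact H.congr_fun fun k => bask_eq hx M k

omit hx in
lemma nat_id (j M : ℕ) :
    (j + 1) * (j + 1 + M).choose M = (M + 1) * (j + (M + 1)).choose (M + 1) := by
  have h1 : (j + 1 + M).choose M = (j + 1 + M).choose (j + 1) := by
    rw [show j + 1 + M = (j + 1) + M from rfl, Nat.choose_symm_add]
  have h2 := Nat.choose_succ_right_eq (j + 1 + M) j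
  have h3 : (j + 1 + M).choose j = (j + (M + 1)).choose (M + 1) := by
    rw [show j + 1 + M = j + (M + 1) by omega, Nat.choose_symm_add]
  rw [h1]
  rw [show j + 1 + M - j = M + 1 by omega] at h2
  rw [← h3, mul_comm, h2, mul_comm]

lemma hasSum_k_bask (M : ℕ) :
    HasSum (fun k : ℕ => (k : ℝ) * bask (M + 1) k x) (((M : ℝ) + 1) * x) := by
  have h1 : (0:ℝ) < 1 + x := by linarith
  have hsub : (1:ℝ) - x / (1 + x) = (1 + x)⁻¹ := by field_simp; ring
  have H := (hasSum_choose_mul_geometric_of_norm_lt_one (𝕜 := ℝ) (M + 1) (hr_norm hx)).mul_left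
    ((((M : ℝ) + 1) * x) * ((1 + x) ^ (M + 2))⁻¹)
  have hval : ((((M : ℝ) + 1) * x) * ((1 + x) ^ (M + 2))⁻¹)
      * (1 / (1 - x / (1 + x)) ^ (M + 1 + 1)) = ((M : ℝ) + 1) * x := by
    rw [hsub, inv_pow, one_div, inv_inv]
    field_simp
  rw [hval] at H
  have H2 : HasSum (fun j : ℕ => ((j : ℝ) + 1) * bask (M + 1) (j + 1) x) (((M : ℝ) + 1) * x) := by
    refine H.congr_fun fun j => ?_
    rw [bask_eq hx M (j + 1)]
    have hid : ((j : ℝ) + 1) * ((j + 1 + M).choose M : ℝ)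
        = ((M : ℝ) + 1) * ((j + (M + 1)).choose (M + 1) : ℝ) := by
      exact_mod_cast nat_id j M
    have e1 : ((1 + x) ^ (M + 2))⁻¹ = ((1 + x) ^ (M + 1))⁻¹ * (1 + x)⁻¹ := by
      rw [show M + 2 = M + 1 + 1 from rfl, pow_succ, mul_inv]
    have e2 : (x / (1 + x)) ^ (j + 1) = (x / (1 + x)) ^ j * (x * (1 + x)⁻¹) := by
      rw [pow_succ, div_eq_mul_inv]
    rw [e1, e2]
    linear_combination ((x / (1 + x)) ^ j * x * (1 + x)⁻¹ * ((1 + x) ^ (M + 1))⁻¹) * hid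
  have H2' : HasSum (fun j : ℕ => (((j + 1 : ℕ) : ℝ)) * bask (M + 1) (j + 1) x)
      (((M : ℝ) + 1) * x) := H2.congr_fun fun j => by push_cast; ring
  have H3 := (hasSum_nat_add_iff (f := fun k : ℕ => (k : ℝ) * bask (M + 1) k x) 1).mp H2'
  simpa using H3

end series
end aux

theorem V1_moment_e1 (n : ℕ) (hn : 3 ≤ n) (x : ℝ) (hx : 0 ≤ x) (a0 a1 : ℕ → ℝ) :
    (∀ k : ℕ, IntegrableOn (fun t : ℝ => bask n k t * t) (Set.Ioi 0)) ∧
    Summable (fun k : ℕ =>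
      |p1 a0 a1 n k x * ∫ t in Set.Ioi (0 : ℝ), bask n k t * t|) ∧
    V1 a0 a1 n (fun t => t) x =
      (2 * a0 n - a1 n) * x + (1 / ((n : ℝ) - 2)) * ((1 + 2 * x) * (3 * a0 n - 2 * a1 n)) := by
  obtain ⟨m, rfl⟩ : ∃ m, n = m + 3 := ⟨n - 3, by omega⟩
  set A : ℝ := a0 (m + 3) + a1 (m + 3) * x with hA
  set B : ℝ := a0 (m + 3) - a1 (m + 3) * (1 + x) with hB
  set c0 : ℝ := (((m : ℝ) + 1) * ((m : ℝ) + 2))⁻¹ with hc0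
  -- basic hasSum facts
  have hB0 := hasSum_bask hx (m + 3)
  have hB1 := hasSum_k_bask hx (m + 3)
  have hq : HasSum (fun k : ℕ => ((k : ℝ) + 1) * bask (m + 3 + 1) k x)
      ((((m + 3 : ℕ) : ℝ) + 1) * x + 1) := by
    refine (hB1.add hB0).congr_fun fun k => by ring
  have hs2 : HasSum (fun j : ℕ => ((j : ℝ) + 2) * bask (m + 3 + 1) j x)
      ((((m + 3 : ℕ) : ℝ) + 1) * x + 2 * 1) :=
    (hB1.add (hB0.mul_left 2)).congr_fun fun j => by ring
  have hs3 : HasSum (fun j : ℕ =>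
      (((j + 1 : ℕ) : ℝ) + 1) * (if (j + 1 : ℕ) = 0 then (0:ℝ)
        else bask (m + 3 + 1) ((j + 1) - 1) x))
      ((((m + 3 : ℕ) : ℝ) + 1) * x + 2 * 1) := by
    refine hs2.congr_fun fun j => ?_
    simp only [Nat.succ_ne_zero, if_false, Nat.add_sub_cancel]
    push_cast; ring
  have hs : HasSum (fun k : ℕ =>
      ((k : ℝ) + 1) * (if k = 0 then (0:ℝ) else bask (m + 3 + 1) (k - 1) x))
      ((((m + 3 : ℕ) : ℝ) + 1) * x + 2 * 1) := by
    have H3 := (hasSum_nat_add_iff (f := fun k : ℕ =>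
      ((k : ℝ) + 1) * (if k = 0 then (0:ℝ) else bask (m + 3 + 1) (k - 1) x)) 1).mp
      (hs3.congr_fun fun j => by push_cast; ring_nf)
    simpa using H3
  -- the summand equals a nice expression
  have hF : ∀ k : ℕ, p1 a0 a1 (m + 3) k x * ∫ t in Set.Ioi (0:ℝ), bask (m + 3) k t * t
      = c0 * (A * (((k : ℝ) + 1) * bask (m + 3 + 1) k x)
          + B * (((k : ℝ) + 1) * (if k = 0 then (0:ℝ) else bask (m + 3 + 1) (k - 1) x))) := by
    intro k
    rw [bask_integral m k]
    unfold p1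
    rw [hc0, hA, hB]
    set It : ℝ := (if k = 0 then (0:ℝ) else bask (m + 3 + 1) (k - 1) x) with hIt
    field_simp
  have hSum : HasSum (fun k : ℕ =>
      p1 a0 a1 (m + 3) k x * ∫ t in Set.Ioi (0:ℝ), bask (m + 3) k t * t)
      (c0 * (A * ((((m + 3 : ℕ) : ℝ) + 1) * x + 1)
        + B * ((((m + 3 : ℕ) : ℝ) + 1) * x + 2 * 1))) :=
    (((hq.mul_left A).add (hs.mul_left B)).mul_left c0).congr_fun hF
  refine ⟨fun k => bask_integrable m k, hSum.summable.abs, ?_⟩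
  unfold V1
  rw [hSum.tsum_eq, hc0, hA, hB]
  have hm1 : ((m : ℝ) + 1) ≠ 0 := by positivity
  have hm2 : ((m : ℝ) + 2) ≠ 0 := by positivity
  push_cast
  have h3 : ((m : ℝ) + 3 - 2) = (m : ℝ) + 1 := by ring
  rw [h3]
  field_simp
  ring
end

section
/- Let f ∈ C_B[0,∞), and let a_0(n), a_1(n) be convergent real sequences satisfying 2a_0(n) − a_1(n) = 1 for all n. Assume moreover that the operators V_{n,1} are positive, i.e. p^1_{n,k}(x) ≥ 0 for all n, all k ≥ 0 and all x ≥ 0. Then for every compact subset A ⊂ [0,∞), the functions x ↦ V_{n,1}(f; x) converge uniformly to f on A as n → ∞. -/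
open MeasureTheory Filter Topology

lemma one_add_pos {t : ℝ} (ht : 0 ≤ t) : (0:ℝ) < 1 + t := by linarith

-- derivative of t ↦ ((1+t)^q)⁻¹
lemma hasDerivAt_inv_one_add_pow (q : ℕ) (t : ℝ) (ht : 0 ≤ t) :
    HasDerivAt (fun s : ℝ => ((1+s)^(q+1))⁻¹) (-((q:ℝ)+1) * ((1+t)^(q+2))⁻¹) t := by
  have h1 : HasDerivAt (fun s : ℝ => (1+s)^(q+1)) (((q:ℝ)+1) * (1+t)^q) t := by
    have := ((hasDerivAt_id t).const_add 1).fun_pow (q+1)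
    simpa using this
  have h2 := h1.inv (by positivity)
  convert h2 using 1
  · rfl
  · rfl
  · rfl
  have h3 : (1+t) ≠ 0 := by positivity
  field_simp
  ring

lemma integrableOn_inv_one_add_pow (q : ℕ) :
    IntegrableOn (fun t : ℝ => ((1+t)^(q+2))⁻¹) (Set.Ioi 0) := by
  have h : ∀ t ∈ Set.Ici (0:ℝ), HasDerivAt (fun s : ℝ => -((q:ℝ)+1)⁻¹ * ((1+s)^(q+1))⁻¹)
      (((1+t)^(q+2))⁻¹) t := by
    intro t ht
    have := (hasDerivAt_inv_one_add_pow q t ht).const_mul (-((q:ℝ)+1)⁻¹)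
    convert this using 1
    · rfl
    · rfl
    have : ((q:ℝ)+1) ≠ 0 := by positivity
    field_simp
  have hlim : Tendsto (fun s : ℝ => -((q:ℝ)+1)⁻¹ * ((1+s)^(q+1))⁻¹) atTop (𝓝 0) := by
    have h1 : Tendsto (fun s : ℝ => (1+s)^(q+1)) atTop atTop :=
      (tendsto_pow_atTop (by omega)).comp (tendsto_atTop_add_const_left _ 1 tendsto_id)
    have := h1.inv_tendsto_atTop.const_mul (-((q:ℝ)+1)⁻¹)
    simpa using this
  exact integrableOn_Ioi_deriv_of_nonneg' h (fun t ht => by have : (0:ℝ) < t := ht; positivity) hlim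

lemma integral_inv_one_add_pow (q : ℕ) :
    ∫ t in Set.Ioi (0:ℝ), ((1+t)^(q+2))⁻¹ = ((q:ℝ)+1)⁻¹ := by
  have h : ∀ t ∈ Set.Ici (0:ℝ), HasDerivAt (fun s : ℝ => -((q:ℝ)+1)⁻¹ * ((1+s)^(q+1))⁻¹)
      (((1+t)^(q+2))⁻¹) t := by
    intro t ht
    have := (hasDerivAt_inv_one_add_pow q t ht).const_mul (-((q:ℝ)+1)⁻¹)
    convert this using 1
    · rfl
    · rfl
    have : ((q:ℝ)+1) ≠ 0 := by positivity
    field_simp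
  have hlim : Tendsto (fun s : ℝ => -((q:ℝ)+1)⁻¹ * ((1+s)^(q+1))⁻¹) atTop (𝓝 0) := by
    have h1 : Tendsto (fun s : ℝ => (1+s)^(q+1)) atTop atTop :=
      (tendsto_pow_atTop (by omega)).comp (tendsto_atTop_add_const_left _ 1 tendsto_id)
    have := h1.inv_tendsto_atTop.const_mul (-((q:ℝ)+1)⁻¹)
    simpa using this
  rw [integral_Ioi_of_hasDerivAt_of_tendsto' h (integrableOn_inv_one_add_pow q) hlim]
  norm_num

lemma continuousOn_pow_div (k m : ℕ) : ContinuousOn (fun t : ℝ => t^k / (1+t)^m) (Set.Ici 0) := by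
  apply ContinuousOn.div (continuousOn_pow k) (Continuous.continuousOn (by continuity))
  intro t ht
  have : (0:ℝ) < 1 + t := one_add_pos ht
  positivity

lemma integrableOn_pow_div (k d : ℕ) :
    IntegrableOn (fun t : ℝ => t^k / (1+t)^(k+d+2)) (Set.Ioi 0) := by
  apply Integrable.mono' (integrableOn_inv_one_add_pow d)
  · exact ((continuousOn_pow_div k (k+d+2)).mono (Set.Ioi_subset_Ici le_rfl)).aestronglyMeasurable
      measurableSet_Ioi
  · refine (ae_restrict_iff' measurableSet_Ioi).2 (ae_of_all _ fun t ht => ?_)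
    have ht' : (0:ℝ) < t := ht
    have h1 : (0:ℝ) < 1 + t := by linarith
    rw [Real.norm_eq_abs, abs_of_nonneg (by positivity)]
    rw [div_le_iff₀ (by positivity)]
    rw [inv_mul_eq_div, le_div_iff₀ (by positivity)]
    calc t^k * (1+t)^(d+2) ≤ (1+t)^k * (1+t)^(d+2) := by
          gcongr; linarith
      _ = (1+t)^(k+d+2) := by rw [← pow_add]; ring_nf

lemma integral_pow_div (k d : ℕ) :
    ∫ t in Set.Ioi (0:ℝ), t^k / (1+t)^(k+d+2)
      = (k.factorial : ℝ) * d.factorial / (k+d+1).factorial := by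
  induction k with
  | zero =>
      simp only [pow_zero, Nat.factorial_zero, Nat.cast_one, one_mul, Nat.zero_add, one_div]
      rw [integral_inv_one_add_pow d, Nat.factorial_succ]
      have : (d.factorial : ℝ) ≠ 0 := by positivity
      push_cast
      rw [eq_div_iff (by positivity)]
      field_simp
  | succ k ih =>
      set F : ℝ → ℝ := fun s => s^(k+1) * ((1+s)^(k+d+2))⁻¹ with hF
      have hderiv : ∀ t ∈ Set.Ici (0:ℝ), HasDerivAt F
          (((k:ℝ)+1) * (t^k / (1+t)^(k+d+2)) - ((k:ℝ)+d+2) * (t^(k+1) / (1+t)^(k+d+3))) t := by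
        intro t ht
        have h1 : HasDerivAt (fun s : ℝ => s^(k+1)) (((k:ℝ)+1) * t^k) t := by
          simpa using hasDerivAt_pow (k+1) t
        have h2 := hasDerivAt_inv_one_add_pow (k+d+1) t ht
        have h3 := h1.mul h2
        convert h3 using 1
        · rfl
        · rfl
        · rfl
        have h4 : (1+t) ≠ 0 := by have : (0:ℝ) ≤ t := ht; positivity
        push_cast
        field_simp
        ring
      have hlim : Tendsto F atTop (𝓝 0) := by
        apply squeeze_zero' (g := fun t : ℝ => ((1+t)^(d+1))⁻¹)
        · filter_upwards [eventually_ge_atTop (0:ℝ)] with t ht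
          have : (0:ℝ) < 1 + t := by linarith
          positivity
        · filter_upwards [eventually_ge_atTop (0:ℝ)] with t ht
          have h1 : (0:ℝ) < 1 + t := by linarith
          have h2 : t^(k+1) ≤ (1+t)^(k+1) := by gcongr; linarith
          calc F t ≤ (1+t)^(k+1) * ((1+t)^(k+d+2))⁻¹ := by
                apply mul_le_mul_of_nonneg_right h2; positivity
            _ = ((1+t)^(d+1))⁻¹ := by
                rw [show k+d+2 = (k+1)+(d+1) by omega, pow_add]
                field_simp
                ring
        · have h1 : Tendsto (fun s : ℝ => (1+s)^(d+1)) atTop atTop :=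
            (tendsto_pow_atTop (by omega)).comp (tendsto_atTop_add_const_left _ 1 tendsto_id)
          exact h1.inv_tendsto_atTop
      have hint1 := integrableOn_pow_div k d
      have hint2 : IntegrableOn (fun t : ℝ => t^(k+1) / (1+t)^(k+d+3)) (Set.Ioi 0) := by
        have := integrableOn_pow_div (k+1) d
        rwa [show k+1+d+2 = k+d+3 by omega] at this
      have hcomb : IntegrableOn (fun t : ℝ =>
          ((k:ℝ)+1) * (t^k / (1+t)^(k+d+2)) - ((k:ℝ)+d+2) * (t^(k+1) / (1+t)^(k+d+3)))
          (Set.Ioi 0) := (hint1.const_mul _).sub (hint2.const_mul _)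
      have hFTC := integral_Ioi_of_hasDerivAt_of_tendsto' hderiv hcomb hlim
      have hF0 : F 0 = 0 := by simp [hF]
      rw [hF0, zero_sub, neg_zero] at hFTC
      rw [integral_sub (hint1.const_mul _) (hint2.const_mul _),
        integral_const_mul, integral_const_mul, ih, sub_eq_zero] at hFTC
      rw [show k+1+d+2 = k+d+3 by omega, show k+1+d+1 = k+d+2 by omega]
      have h5 : ((k:ℝ)+d+2) ≠ 0 := by positivity
      have h6 : ∫ t in Set.Ioi (0:ℝ), t^(k+1) / (1+t)^(k+d+3)
          = ((k:ℝ)+1) * ((k.factorial : ℝ) * d.factorial / (k+d+1).factorial) / ((k:ℝ)+d+2) := by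
        field_simp at hFTC ⊢
        linarith [hFTC]
      rw [h6, Nat.factorial_succ k, Nat.factorial_succ (k+d+1)]
      have h7 : ((k+d+1).factorial : ℝ) ≠ 0 := by positivity
      push_cast
      field_simp
      ring

lemma bask_nonneg (n k : ℕ) {t : ℝ} (ht : 0 ≤ t) : 0 ≤ bask n k t := by
  unfold bask; positivity

lemma bask_eq_mul (n k : ℕ) (t : ℝ) :
    bask n k t = ((n+k-1).choose k : ℝ) * (t^k/(1+t)^(n+k)) := by
  unfold bask; ring

lemma continuousOn_bask (n k : ℕ) : ContinuousOn (fun t : ℝ => bask n k t) (Set.Ici 0) := by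
  simp only [bask_eq_mul]
  exact (continuousOn_pow_div k (n+k)).const_smul (((n+k-1).choose k : ℝ))

-- j-th moment integrand rewrite
lemma bask_mul_pow_eq (ν k j : ℕ) (hj : j ≤ 2) (t : ℝ) :
    bask (ν+4) k t * t^j = ((ν+3+k).choose k : ℝ) * (t^(k+j)/(1+t)^((k+j)+(ν+2-j)+2)) := by
  rw [bask_eq_mul, show ν+4+k-1 = ν+3+k by omega, show (k+j)+(ν+2-j)+2 = ν+4+k by omega,
    pow_add]
  ring

lemma integrableOn_bask_mul_pow (ν k j : ℕ) (hj : j ≤ 2) :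
    IntegrableOn (fun t : ℝ => bask (ν+4) k t * t^j) (Set.Ioi 0) := by
  revert hj
  intro hj
  have h : IntegrableOn
      (fun t : ℝ => ((ν+3+k).choose k : ℝ) * (t^(k+j)/(1+t)^((k+j)+(ν+2-j)+2))) (Set.Ioi 0) :=
    (integrableOn_pow_div (k+j) (ν+2-j)).const_mul _
  exact h.congr_fun (fun t _ => (bask_mul_pow_eq ν k j hj t).symm) measurableSet_Ioi

lemma integral_bask_mul_pow (ν k j : ℕ) (hj : j ≤ 2) :
    ∫ t in Set.Ioi (0:ℝ), bask (ν+4) k t * t^j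
      = ((ν+3+k).choose k : ℝ) * ((k+j).factorial * (ν+2-j).factorial / ((k+j)+(ν+2-j)+1).factorial) := by
  rw [setIntegral_congr_fun measurableSet_Ioi (fun t _ => bask_mul_pow_eq ν k j hj t)]
  rw [integral_const_mul, integral_pow_div]

lemma integral_bask (ν k : ℕ) :
    ∫ t in Set.Ioi (0:ℝ), bask (ν+4) k t = 1/((ν:ℝ)+3) := by
  have h := integral_bask_mul_pow ν k 0 (by omega)
  simp only [pow_zero, mul_one, Nat.sub_zero] at h
  rw [h]
  rw [Nat.cast_choose ℝ (by omega : k ≤ ν+3+k)]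
  rw [show ν+3+k-k = ν+3 by omega, show k+0+(ν+2)+1 = ν+3+k by omega,
    show k+0 = k from rfl]
  rw [show (ν+3).factorial = (ν+3)*(ν+2).factorial by
    rw [show ν+3 = (ν+2)+1 by omega, Nat.factorial_succ]]
  have h1 : ((ν+3+k).factorial : ℝ) ≠ 0 := by positivity
  have h2 : (k.factorial : ℝ) ≠ 0 := by positivity
  have h3 : ((ν+2).factorial : ℝ) ≠ 0 := by positivity
  push_cast
  field_simp

lemma integral_bask_t (ν k : ℕ) :
    ∫ t in Set.Ioi (0:ℝ), bask (ν+4) k t * t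
      = ((k:ℝ)+1)/(((ν:ℝ)+3)*((ν:ℝ)+2)) := by
  have h := integral_bask_mul_pow ν k 1 (by omega)
  simp only [pow_one] at h
  rw [h]
  rw [Nat.cast_choose ℝ (by omega : k ≤ ν+3+k)]
  rw [show ν+3+k-k = ν+3 by omega, show ν+2-1 = ν+1 by omega,
    show k+1+(ν+1)+1 = ν+3+k by omega]
  rw [show (ν+3).factorial = (ν+3)*((ν+2)*(ν+1).factorial) by
    rw [show ν+3 = (ν+2)+1 by omega, Nat.factorial_succ, show ν+2 = (ν+1)+1 by omega,
      Nat.factorial_succ]]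
  rw [Nat.factorial_succ k]
  have h1 : ((ν+3+k).factorial : ℝ) ≠ 0 := by positivity
  have h2 : (k.factorial : ℝ) ≠ 0 := by positivity
  have h3 : ((ν+1).factorial : ℝ) ≠ 0 := by positivity
  push_cast
  field_simp

lemma integral_bask_t2 (ν k : ℕ) :
    ∫ t in Set.Ioi (0:ℝ), bask (ν+4) k t * t^2
      = ((k:ℝ)+1)*((k:ℝ)+2)/(((ν:ℝ)+3)*((ν:ℝ)+2)*((ν:ℝ)+1)) := by
  have h := integral_bask_mul_pow ν k 2 (by omega)
  rw [h]
  rw [Nat.cast_choose ℝ (by omega : k ≤ ν+3+k)]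
  rw [show ν+3+k-k = ν+3 by omega, show ν+2-2 = ν by omega,
    show k+2+ν+1 = ν+3+k by omega]
  rw [show (ν+3).factorial = (ν+3)*((ν+2)*((ν+1)*ν.factorial)) by
    rw [show ν+3 = (ν+2)+1 by omega, Nat.factorial_succ, show ν+2 = (ν+1)+1 by omega,
      Nat.factorial_succ, show ν+1 = ν+1 from rfl, Nat.factorial_succ]]
  rw [show (k+2).factorial = (k+2)*((k+1)*k.factorial) by
    rw [Nat.factorial_succ, Nat.factorial_succ]]
  have h1 : ((ν+3+k).factorial : ℝ) ≠ 0 := by positivity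
  have h2 : (k.factorial : ℝ) ≠ 0 := by positivity
  have h3 : (ν.factorial : ℝ) ≠ 0 := by positivity
  push_cast
  field_simp

lemma bask_eq_geom (n k : ℕ) {x : ℝ} (hx : 0 ≤ x) :
    bask (n+1) k x = ((k+n).choose n : ℝ) * (x/(1+x))^k * ((1+x)^(n+1))⁻¹ := by
  have h1 : (0:ℝ) < 1 + x := by linarith
  have h2 : (n+1+k-1).choose k = (k+n).choose n := by
    rw [show n+1+k-1 = n+k by omega]
    rw [show (k+n).choose n = (k+n).choose (k+n-k) by rw [show k+n-k = n by omega]]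
    rw [Nat.choose_symm (by omega), add_comm]
  unfold bask
  rw [h2, div_pow]
  rw [show n+1+k = k+(n+1) by omega, pow_add]
  field_simp

lemma hS0 (n : ℕ) {x : ℝ} (hx : 0 ≤ x) : HasSum (fun k => bask (n+1) k x) 1 := by
  have h1 : (0:ℝ) < 1 + x := by linarith
  have hu : ‖x/(1+x)‖ < 1 := by
    rw [Real.norm_eq_abs, abs_of_nonneg (by positivity)]
    rw [div_lt_one h1]; linarith
  have h := (hasSum_choose_mul_geometric_of_norm_lt_one n hu).mul_right ((1+x)^(n+1))⁻¹
  have he : (fun k => ((k+n).choose n : ℝ) * (x/(1+x))^k * ((1+x)^(n+1))⁻¹)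
      = fun k => bask (n+1) k x := by
    funext k; rw [bask_eq_geom n k hx]
  rw [he] at h
  convert h using 1
  · rfl
  have h2 : (1:ℝ) - x/(1+x) = (1+x)⁻¹ := by field_simp; ring
  rw [h2]
  field_simp
  rw [← mul_pow, one_div_mul_cancel h1.ne', one_pow]

lemma hS1 (n : ℕ) {x : ℝ} (hx : 0 ≤ x) :
    HasSum (fun k : ℕ => (k:ℝ) * bask (n+1) k x) (((n:ℝ)+1)*x) := by
  have h1 : (0:ℝ) < 1 + x := by linarith
  have h := (hS0 (n+1) hx).mul_left (((n:ℝ)+1)*x)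
  have he : ∀ k : ℕ, ((n:ℝ)+1)*x * bask (n+2) k x = ((k:ℝ)+1) * bask (n+1) (k+1) x := by
    intro k
    have hc : (n+k+1).choose (k+1) * (k+1) = (n+k+1).choose k * (n+1) := by
      have := Nat.choose_succ_right_eq (n+k+1) k
      rw [show n+k+1-k = n+1 by omega] at this
      exact this
    unfold bask
    rw [show n+2+k-1 = n+k+1 by omega, show n+1+(k+1)-1 = n+k+1 by omega,
      show n+1+(k+1) = n+2+k by omega]
    have := congrArg (fun m : ℕ => (m:ℝ)) hc
    push_cast at this ⊢
    field_simp
    linear_combination (-(x * x^k)) * this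
  have h2 : HasSum (fun k : ℕ => ((k:ℕ)+1 : ℝ) * bask (n+1) (k+1) x) (((n:ℝ)+1)*x) := by
    rw [show ((n:ℝ)+1)*x = ((n:ℝ)+1)*x*1 by ring]
    exact h.congr_fun fun k => (he k).symm
  have h3 := (hasSum_nat_add_iff (f := fun k : ℕ => (k:ℝ) * bask (n+1) k x) 1).mp
    (by simpa using h2)
  simpa using h3


lemma hS2 (n : ℕ) {x : ℝ} (hx : 0 ≤ x) :
    HasSum (fun k : ℕ => (k:ℝ) * ((k:ℝ)-1) * bask (n+1) k x)
      (((n:ℝ)+1)*((n:ℝ)+2)*x^2) := by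
  have h1 : (0:ℝ) < 1 + x := by linarith
  have h := (hS0 (n+2) hx).mul_left (((n:ℝ)+1)*((n:ℝ)+2)*x^2)
  have he : ∀ k : ℕ, ((n:ℝ)+1)*((n:ℝ)+2)*x^2 * bask (n+3) k x
      = (((k:ℕ)+2:ℝ)) * (((k:ℕ)+2:ℝ)-1) * bask (n+1) (k+2) x := by
    intro k
    have hc1 := Nat.choose_succ_right_eq (n+k+2) (k+1)
    rw [show n+k+2-(k+1) = n+1 by omega] at hc1
    have hc2 := Nat.choose_succ_right_eq (n+k+2) k
    rw [show n+k+2-k = n+2 by omega] at hc2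
    have hcc : ((n+k+2).choose (k+2) : ℝ) * ((k:ℝ)+2) * ((k:ℝ)+1)
        = ((n+k+2).choose k : ℝ) * ((n:ℝ)+1) * ((n:ℝ)+2) := by
      have e1 := congrArg (fun m : ℕ => (m:ℝ)) hc1
      have e2 := congrArg (fun m : ℕ => (m:ℝ)) hc2
      push_cast at e1 e2
      nlinarith [e1, e2]
    unfold bask
    rw [show n+3+k-1 = n+k+2 by omega, show n+1+(k+2)-1 = n+k+2 by omega,
      show n+1+(k+2) = n+3+k by omega]
    push_cast
    field_simp
    linear_combination (-(x^2 * x^k)) * hcc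
  have h2 : HasSum (fun k : ℕ => (((k:ℕ)+2:ℝ)) * (((k:ℕ)+2:ℝ)-1) * bask (n+1) (k+2) x)
      (((n:ℝ)+1)*((n:ℝ)+2)*x^2) := by
    rw [show ((n:ℝ)+1)*((n:ℝ)+2)*x^2 = ((n:ℝ)+1)*((n:ℝ)+2)*x^2*1 by ring]
    exact h.congr_fun fun k => (he k).symm
  have h3 := (hasSum_nat_add_iff (f := fun k : ℕ => (k:ℝ) * ((k:ℝ)-1) * bask (n+1) k x) 2).mp
    (by push_cast; simpa using h2)
  simpa [Finset.sum_range_succ] using h3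

lemma hSquad (n : ℕ) {x : ℝ} (hx : 0 ≤ x) (A B C : ℝ) :
    HasSum (fun k : ℕ => (A + B*(k:ℝ) + C*((k:ℝ)*((k:ℝ)-1))) * bask (n+1) k x)
      (A + B*(((n:ℝ)+1)*x) + C*(((n:ℝ)+1)*((n:ℝ)+2)*x^2)) := by
  have h := (((hS0 n hx).mul_left A).add ((hS1 n hx).mul_left B)).add
    ((hS2 n hx).mul_left C)
  convert h using 1
  · rfl
  · funext k; ring
  · ring

lemma hSp1 (a0 a1 : ℕ → ℝ) (n : ℕ) {x : ℝ} (hx : 0 ≤ x) (A B C : ℝ) :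
    HasSum (fun k : ℕ => p1 a0 a1 n k x * (A + B*(k:ℝ) + C*((k:ℝ)*((k:ℝ)-1))))
      ((a0 n + a1 n * x) * (A + B*(((n:ℝ)+1)*x) + C*(((n:ℝ)+1)*((n:ℝ)+2)*x^2))
        + (a0 n - a1 n * (1+x)) * ((A+B) + (B+2*C)*(((n:ℝ)+1)*x)
            + C*(((n:ℝ)+1)*((n:ℝ)+2)*x^2))) := by
  set α := a0 n + a1 n * x
  set β := a0 n - a1 n * (1 + x)
  have hfirst : HasSum (fun k : ℕ => α * bask (n+1) k x * (A + B*(k:ℝ) + C*((k:ℝ)*((k:ℝ)-1))))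
      (α * (A + B*(((n:ℝ)+1)*x) + C*(((n:ℝ)+1)*((n:ℝ)+2)*x^2))) := by
    have := (hSquad n hx A B C).mul_left α
    convert this using 1
    · rfl
    funext k; ring
  have hsecond : HasSum (fun k : ℕ =>
      β * (if k = 0 then 0 else bask (n+1) (k-1) x) * (A + B*(k:ℝ) + C*((k:ℝ)*((k:ℝ)-1))))
      (β * ((A+B) + (B+2*C)*(((n:ℝ)+1)*x) + C*(((n:ℝ)+1)*((n:ℝ)+2)*x^2))) := by
    set t : ℕ → ℝ := fun k =>
      β * (if k = 0 then 0 else bask (n+1) (k-1) x) * (A + B*(k:ℝ) + C*((k:ℝ)*((k:ℝ)-1)))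
      with ht
    have hshift : HasSum (fun k : ℕ => t (k+1))
        (β * ((A+B) + (B+2*C)*(((n:ℝ)+1)*x) + C*(((n:ℝ)+1)*((n:ℝ)+2)*x^2))) := by
      have := (hSquad n hx (A+B) (B+2*C) C).mul_left β
      convert this using 1
      · rfl
      funext k
      simp only [ht, Nat.add_sub_cancel, if_neg (Nat.succ_ne_zero k)]
      push_cast
      ring
    have := (hasSum_nat_add_iff (f := t) 1).mp hshift
    simpa [ht] using this
  have := hfirst.add hsecond
  convert this using 1
  funext k
  simp only [p1]
  ring

set_option maxHeartbeats 2000000 in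
lemma key_est (a0 a1 : ℕ → ℝ) (f : ℝ → ℝ) (M ε c : ℝ) (ν : ℕ) {x : ℝ} (hx : 0 ≤ x)
    (hrel : 2 * a0 (ν+4) - a1 (ν+4) = 1)
    (hpos : ∀ k : ℕ, 0 ≤ p1 a0 a1 (ν+4) k x)
    (hfm : AEStronglyMeasurable f (volume.restrict (Set.Ioi 0)))
    (hfb : ∀ t ∈ Set.Ici (0:ℝ), |f t| ≤ M)
    (hε : 0 ≤ ε) (hc : 0 ≤ c)
    (hpw : ∀ t ∈ Set.Ioi (0:ℝ), |f t - f x| ≤ ε + c*(t-x)^2) :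
    |V1 a0 a1 (ν+4) f x - f x|
      ≤ ε + c * (((2*((ν:ℝ)+4)+14)*x^2
          + (2*((ν:ℝ)+4)+10+8*(a0 (ν+4) - a1 (ν+4)*(1+x)))*x
          + 4*(a0 (ν+4) - a1 (ν+4)*(1+x))+2) / ((((ν:ℝ)+2))*(((ν:ℝ)+1)))) := by
  set n := ν + 4 with hn
  have hν3 : (0:ℝ) < (ν:ℝ) + 3 := by positivity
  -- integrability facts
  have ibask : ∀ k : ℕ, IntegrableOn (fun t : ℝ => bask n k t) (Set.Ioi 0) := by
    intro k
    have := integrableOn_bask_mul_pow ν k 0 (by omega)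
    simpa using this
  have iInt_f : ∀ k : ℕ, IntegrableOn (fun t : ℝ => bask n k t * f t) (Set.Ioi 0) := by
    intro k
    apply Integrable.mono' ((ibask k).const_mul M)
    · exact (((continuousOn_bask n k).mono (Set.Ioi_subset_Ici le_rfl)).aestronglyMeasurable
        measurableSet_Ioi).mul hfm
    · refine (ae_restrict_iff' measurableSet_Ioi).2 (ae_of_all _ fun t ht => ?_)
      have ht' : (0:ℝ) < t := ht
      rw [Real.norm_eq_abs, abs_mul, abs_of_nonneg (bask_nonneg n k ht'.le)]
      calc bask n k t * |f t| ≤ bask n k t * M := by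
            apply mul_le_mul_of_nonneg_left (hfb t ht'.le) (bask_nonneg n k ht'.le)
        _ = M * bask n k t := by ring
  have iq : ∀ k : ℕ, IntegrableOn (fun t : ℝ => bask n k t * (ε + c*(t-x)^2)) (Set.Ioi 0) := by
    intro k
    have hInt1 : IntegrableOn
        (fun t : ℝ => (ε + c*x^2) * bask n k t + c * (bask n k t * t^2)) (Set.Ioi 0) :=
      Integrable.add ((ibask k).const_mul _)
        ((integrableOn_bask_mul_pow ν k 2 (by omega)).const_mul c)
    have hInt2 : IntegrableOn (fun t : ℝ => (2*c*x) * (bask n k t * t)) (Set.Ioi 0) := by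
      have := (integrableOn_bask_mul_pow ν k 1 (by omega)).const_mul (2*c*x)
      simp only [pow_one] at this; exact this
    refine MeasureTheory.IntegrableOn.congr_fun (hInt1.sub hInt2) (fun t _ => ?_) measurableSet_Ioi
    simp only [Pi.sub_apply]
    ring
  -- value of the quadratic integral
  set Q : ℕ → ℝ := fun k =>
    (ε + c*x^2)/((ν:ℝ)+3) + c*(((k:ℝ)+1)*((k:ℝ)+2)/((((ν:ℝ)+3))*(((ν:ℝ)+2))*(((ν:ℝ)+1))))
      - 2*c*x*(((k:ℝ)+1)/((((ν:ℝ)+3))*(((ν:ℝ)+2)))) with hQ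
  have iqval : ∀ k : ℕ, ∫ t in Set.Ioi (0:ℝ), bask n k t * (ε + c*(t-x)^2) = Q k := by
    intro k
    have hInt1 : IntegrableOn
        (fun t : ℝ => (ε + c*x^2) * bask n k t + c * (bask n k t * t^2)) (Set.Ioi 0) :=
      Integrable.add ((ibask k).const_mul _)
        ((integrableOn_bask_mul_pow ν k 2 (by omega)).const_mul c)
    have hInt2 : IntegrableOn (fun t : ℝ => (2*c*x) * (bask n k t * t)) (Set.Ioi 0) := by
      have := (integrableOn_bask_mul_pow ν k 1 (by omega)).const_mul (2*c*x)
      simp only [pow_one] at this; exact this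
    have he : Set.EqOn (fun t : ℝ => bask n k t * (ε + c*(t-x)^2))
        (fun t : ℝ => ((ε + c*x^2) * bask n k t + c * (bask n k t * t^2))
          - (2*c*x) * (bask n k t * t)) (Set.Ioi 0) := by
      intro t _; simp only; ring
    rw [setIntegral_congr_fun measurableSet_Ioi he]
    rw [integral_sub hInt1 hInt2]
    rw [integral_add ((ibask k).const_mul _)
      ((integrableOn_bask_mul_pow ν k 2 (by omega)).const_mul c)]
    rw [integral_const_mul, integral_const_mul, integral_const_mul]
    rw [integral_bask ν k, integral_bask_t2 ν k]
    have h3 := integral_bask_t ν k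
    rw [h3, hQ]
    ring
  -- the difference bound per k
  have hsubint : ∀ k : ℕ,
      IntegrableOn (fun t : ℝ => bask n k t * (f t - f x)) (Set.Ioi 0) := by
    intro k
    refine MeasureTheory.IntegrableOn.congr_fun ((iInt_f k).sub ((ibask k).mul_const (f x)))
      (fun t _ => ?_) measurableSet_Ioi
    simp only [Pi.sub_apply]
    ring
  have hdiff : ∀ k : ℕ,
      |(∫ t in Set.Ioi (0:ℝ), bask n k t * f t) - f x * (1/((ν:ℝ)+3))| ≤ Q k := by
    intro k
    have h1 : (∫ t in Set.Ioi (0:ℝ), bask n k t * f t) - f x * (1/((ν:ℝ)+3))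
        = ∫ t in Set.Ioi (0:ℝ), bask n k t * (f t - f x) := by
      rw [show (∫ t in Set.Ioi (0:ℝ), bask n k t * (f t - f x))
          = ∫ t in Set.Ioi (0:ℝ), (bask n k t * f t - bask n k t * f x) from
        setIntegral_congr_fun measurableSet_Ioi (fun t _ => by ring)]
      rw [integral_sub (iInt_f k) ((ibask k).mul_const (f x))]
      rw [integral_mul_const, integral_bask ν k]
      ring
    rw [h1]
    calc |∫ t in Set.Ioi (0:ℝ), bask n k t * (f t - f x)|
        ≤ ∫ t in Set.Ioi (0:ℝ), |bask n k t * (f t - f x)| := by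
          have := norm_integral_le_integral_norm
            (μ := volume.restrict (Set.Ioi 0)) (f := fun t : ℝ => bask n k t * (f t - f x))
          simp only [Real.norm_eq_abs] at this
          exact this
      _ ≤ ∫ t in Set.Ioi (0:ℝ), bask n k t * (ε + c*(t-x)^2) := by
          apply setIntegral_mono_on (hsubint k).abs (iq k) measurableSet_Ioi
          intro t ht
          have ht' : (0:ℝ) < t := ht
          rw [abs_mul, abs_of_nonneg (bask_nonneg n k ht'.le)]
          exact mul_le_mul_of_nonneg_left (hpw t ht) (bask_nonneg n k ht'.le)
      _ = Q k := iqval k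
  -- sums
  set βv := a0 n - a1 n * (1 + x) with hβv
  have hα : a0 n + a1 n * x = 1 - βv := by rw [hβv]; linarith [hrel]
  have hsum_p1 : HasSum (fun k : ℕ => p1 a0 a1 n k x) 1 := by
    have h := hSp1 a0 a1 n hx 1 0 0
    have h1 : (fun k : ℕ => p1 a0 a1 n k x * (1 + 0*(k:ℝ) + 0*((k:ℝ)*((k:ℝ)-1))))
        = fun k : ℕ => p1 a0 a1 n k x := by funext k; ring
    rw [h1] at h
    convert h using 1
    rw [hα]
    ring
  set E : ℝ := ((2*((ν:ℝ)+4)+14)*x^2 + (2*((ν:ℝ)+4)+10+8*βv)*x + 4*βv+2)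
      / ((((ν:ℝ)+2))*(((ν:ℝ)+1))) with hE
  have hν1 : ((ν:ℝ)+1) ≠ 0 := by positivity
  have hν2 : ((ν:ℝ)+2) ≠ 0 := by positivity
  have hν3' : ((ν:ℝ)+3) ≠ 0 := by positivity
  have hsum_q : HasSum (fun k : ℕ => p1 a0 a1 n k x * (((ν:ℝ)+3) * Q k)) (ε + c*E) := by
    have h := hSp1 a0 a1 n hx
      (ε + c*x^2 + 2*c/((((ν:ℝ)+2))*(((ν:ℝ)+1))) - 2*x*c/((ν:ℝ)+2))
      (4*c/((((ν:ℝ)+2))*(((ν:ℝ)+1))) - 2*x*c/((ν:ℝ)+2))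
      (c/((((ν:ℝ)+2))*(((ν:ℝ)+1))))
    have h1 : ∀ k : ℕ,
        (ε + c*x^2 + 2*c/((((ν:ℝ)+2))*(((ν:ℝ)+1))) - 2*x*c/((ν:ℝ)+2))
          + (4*c/((((ν:ℝ)+2))*(((ν:ℝ)+1))) - 2*x*c/((ν:ℝ)+2))*(k:ℝ)
          + (c/((((ν:ℝ)+2))*(((ν:ℝ)+1))))*((k:ℝ)*((k:ℝ)-1))
        = ((ν:ℝ)+3) * Q k := by
      intro k
      rw [hQ]
      field_simp
      ring
    have h2 : (fun k : ℕ => p1 a0 a1 n k x *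
        ((ε + c*x^2 + 2*c/((((ν:ℝ)+2))*(((ν:ℝ)+1))) - 2*x*c/((ν:ℝ)+2))
          + (4*c/((((ν:ℝ)+2))*(((ν:ℝ)+1))) - 2*x*c/((ν:ℝ)+2))*(k:ℝ)
          + (c/((((ν:ℝ)+2))*(((ν:ℝ)+1))))*((k:ℝ)*((k:ℝ)-1))))
        = fun k : ℕ => p1 a0 a1 n k x * (((ν:ℝ)+3) * Q k) := by
      funext k; rw [h1 k]
    rw [h2] at h
    convert h using 1
    rw [hα, hE]
    rw [hβv, hn]
    push_cast
    field_simp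
    ring
  have hQnn : ∀ k : ℕ, 0 ≤ Q k := by
    intro k
    rw [← iqval k]
    apply setIntegral_nonneg measurableSet_Ioi
    intro t ht
    have ht' : (0:ℝ) < t := ht
    have := hpw t ht
    have h0 : 0 ≤ ε + c*(t-x)^2 := le_trans (abs_nonneg _) this
    exact mul_nonneg (bask_nonneg n k ht'.le) h0
  have hsum_pQ : Summable (fun k : ℕ => p1 a0 a1 n k x * Q k) := by
    have h := hsum_q.summable.mul_left (((ν:ℝ)+3)⁻¹)
    apply h.congr
    intro k
    rw [show ∀ a b : ℝ, ((ν:ℝ)+3)⁻¹ * (a * (((ν:ℝ)+3) * b)) = a * b from fun a b => by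
      field_simp]
  set D : ℕ → ℝ := fun k =>
    p1 a0 a1 n k x * ((∫ t in Set.Ioi (0:ℝ), bask n k t * f t) - f x * (1/((ν:ℝ)+3)))
    with hD
  have hDle : ∀ k : ℕ, |D k| ≤ p1 a0 a1 n k x * Q k := by
    intro k
    rw [hD]
    simp only [abs_mul, abs_of_nonneg (hpos k)]
    exact mul_le_mul_of_nonneg_left (hdiff k) (hpos k)
  have hDabs : Summable (fun k : ℕ => |D k|) :=
    Summable.of_nonneg_of_le (fun k => abs_nonneg _) hDle hsum_pQ
  have hDsum : Summable D := hDabs.of_abs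
  -- identify V1 with the sums
  have hPf_split : (fun k : ℕ => p1 a0 a1 n k x * ∫ t in Set.Ioi (0:ℝ), bask n k t * f t)
      = fun k : ℕ => D k + p1 a0 a1 n k x * (f x * (1/((ν:ℝ)+3))) := by
    funext k; rw [hD]; ring
  have hsum_c : HasSum (fun k : ℕ => p1 a0 a1 n k x * (f x * (1/((ν:ℝ)+3))))
      (f x * (1/((ν:ℝ)+3))) := by
    have := hsum_p1.mul_right (f x * (1/((ν:ℝ)+3)))
    simpa using this
  have hV : V1 a0 a1 n f x = ((ν:ℝ)+3) * ((∑' k, D k) + f x * (1/((ν:ℝ)+3))) := by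
    unfold V1
    rw [hPf_split, Summable.tsum_add hDsum hsum_c.summable, hsum_c.tsum_eq]
    have : ((n:ℕ):ℝ) - 1 = (ν:ℝ)+3 := by rw [hn]; push_cast; ring
    rw [this]
  have hfinal : |V1 a0 a1 n f x - f x| = (((ν:ℝ)+3)) * |∑' k, D k| := by
    rw [hV]
    rw [show ((ν:ℝ)+3) * ((∑' k, D k) + f x * (1/((ν:ℝ)+3))) - f x
        = ((ν:ℝ)+3) * (∑' k, D k) by field_simp; ring]
    rw [abs_mul, abs_of_nonneg (by positivity : (0:ℝ) ≤ (ν:ℝ)+3)]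
  rw [hfinal]
  calc ((ν:ℝ)+3) * |∑' k, D k| ≤ ((ν:ℝ)+3) * ∑' k, |D k| := by
        apply mul_le_mul_of_nonneg_left _ (by positivity : (0:ℝ) ≤ (ν:ℝ)+3)
        have := norm_tsum_le_tsum_norm (f := D) (by simpa using hDabs)
        simpa using this
    _ ≤ ((ν:ℝ)+3) * ∑' k, p1 a0 a1 n k x * Q k := by
        apply mul_le_mul_of_nonneg_left _ (by positivity : (0:ℝ) ≤ (ν:ℝ)+3)
        exact Summable.tsum_le_tsum hDle hDabs hsum_pQ
    _ = ∑' k, p1 a0 a1 n k x * (((ν:ℝ)+3) * Q k) := by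
        rw [← tsum_mul_left]
        congr 1
        funext k
        ring
    _ = ε + c*E := hsum_q.tsum_eq

set_option maxHeartbeats 2000000 in
theorem V1_uniform_convergence_positive (f : ℝ → ℝ)
    (hf_cont : ContinuousOn f (Set.Ici 0))
    (hf_bdd : ∃ M : ℝ, ∀ t ∈ Set.Ici (0 : ℝ), |f t| ≤ M)
    (a0 a1 : ℕ → ℝ)
    (ha0 : ∃ l : ℝ, Tendsto a0 atTop (𝓝 l)) (ha1 : ∃ m : ℝ, Tendsto a1 atTop (𝓝 m))
    (hrel : ∀ n : ℕ, 2 * a0 n - a1 n = 1)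
    (hpos : ∀ (n k : ℕ) (y : ℝ), 0 ≤ y → 0 ≤ p1 a0 a1 n k y)
    (A : Set ℝ) (hA : A ⊆ Set.Ici 0) (hA_cpt : IsCompact A) :
    TendstoUniformlyOn (fun (n : ℕ) (y : ℝ) => V1 a0 a1 n f y) f atTop A := by
  have hfm : AEStronglyMeasurable f (volume.restrict (Set.Ioi 0)) :=
    (hf_cont.mono (Set.Ioi_subset_Ici le_rfl)).aestronglyMeasurable measurableSet_Ioi
  -- bound for f
  obtain ⟨M0, hM0⟩ := hf_bdd
  set M := max M0 0 with hM
  have hfb : ∀ t ∈ Set.Ici (0:ℝ), |f t| ≤ M := fun t ht => (hM0 t ht).trans (le_max_left _ _)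
  have hMnn : 0 ≤ M := le_max_right _ _
  -- bound for A
  obtain ⟨r, hr⟩ := hA_cpt.isBounded.subset_closedBall 0
  set C := max r 0 with hC
  have hCnn : 0 ≤ C := le_max_right _ _
  have hxC : ∀ x ∈ A, x ≤ C := by
    intro x hxA
    have := hr hxA
    rw [Metric.mem_closedBall, Real.dist_eq, sub_zero] at this
    exact (le_abs_self x).trans (this.trans (le_max_left _ _))
  -- bounds for a0 a1
  obtain ⟨l0, hl0⟩ := ha0
  obtain ⟨l1, hl1⟩ := ha1
  obtain ⟨K0, hK0⟩ := (hl0.abs).bddAbove_range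
  obtain ⟨K1, hK1⟩ := (hl1.abs).bddAbove_range
  set K := max K0 K1 with hKdef
  have hKa0 : ∀ n, |a0 n| ≤ K := fun n => (hK0 ⟨n, rfl⟩).trans (le_max_left _ _)
  have hKa1 : ∀ n, |a1 n| ≤ K := fun n => (hK1 ⟨n, rfl⟩).trans (le_max_right _ _)
  have hKnn : 0 ≤ K := (abs_nonneg _).trans (hKa0 0)
  set B0 := K * (2 + C) with hB0
  have hB0nn : 0 ≤ B0 := by positivity
  have hβ : ∀ (n : ℕ), ∀ x ∈ A, |a0 n - a1 n * (1+x)| ≤ B0 := by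
    intro n x hxA
    have hx0 : (0:ℝ) ≤ x := hA hxA
    have h1 : |a0 n - a1 n * (1+x)| ≤ |a0 n| + |a1 n| * (1+x) := by
      calc |a0 n - a1 n * (1+x)| ≤ |a0 n| + |a1 n * (1+x)| := abs_sub _ _
        _ = |a0 n| + |a1 n| * |1+x| := by rw [abs_mul]
        _ = |a0 n| + |a1 n| * (1+x) := by rw [abs_of_nonneg (by linarith : (0:ℝ) ≤ 1+x)]
    have h2 : |a1 n| * (1+x) ≤ K * (1+C) := by
      apply mul_le_mul (hKa1 n) (by linarith [hxC x hxA]) (by linarith) hKnn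
    calc |a0 n - a1 n * (1+x)| ≤ |a0 n| + |a1 n| * (1+x) := h1
      _ ≤ K + K * (1+C) := by linarith [hKa0 n]
      _ = B0 := by rw [hB0]; ring
  -- start the epsilon argument
  rw [Metric.tendstoUniformlyOn_iff]
  intro ε hε
  -- uniform continuity
  have hucont : UniformContinuousOn f (Set.Icc 0 (C+1)) :=
    isCompact_Icc.uniformContinuousOn_of_continuous
      (hf_cont.mono (fun t ht => ht.1))
  obtain ⟨δ0, hδ0pos, hδ0⟩ := Metric.uniformContinuousOn_iff.mp hucont (ε/2) (by linarith)
  set δ := min δ0 1 with hδdef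
  have hδpos : 0 < δ := lt_min hδ0pos one_pos
  have hδ1 : δ ≤ 1 := min_le_right _ _
  set c := 2*M/δ^2 with hc
  have hcnn : 0 ≤ c := by positivity
  -- pointwise modulus bound
  have hpw : ∀ x ∈ A, ∀ t ∈ Set.Ioi (0:ℝ), |f t - f x| ≤ ε/2 + c*(t-x)^2 := by
    intro x hxA t ht
    have hx0 : (0:ℝ) ≤ x := hA hxA
    have ht0 : (0:ℝ) < t := ht
    by_cases hcase : |t - x| < δ
    · have htmem : t ∈ Set.Icc (0:ℝ) (C+1) := by
        constructor
        · exact ht0.le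
        · have := (abs_lt.mp hcase).2
          have := hxC x hxA
          linarith [hδ1]
      have hxmem : x ∈ Set.Icc (0:ℝ) (C+1) := ⟨hx0, by linarith [hxC x hxA]⟩
      have := hδ0 t htmem x hxmem (by rw [Real.dist_eq]; exact hcase.trans_le (min_le_left _ _))
      rw [Real.dist_eq] at this
      nlinarith [sq_nonneg (t-x), hcnn, mul_nonneg hcnn (sq_nonneg (t-x))]
    · push_neg at hcase
      have h1 : δ^2 ≤ (t-x)^2 := by
        have := abs_nonneg (t-x)
        nlinarith [sq_abs (t-x)]
      have h2 : 2*M ≤ c*(t-x)^2 := by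
        rw [hc]
        rw [div_mul_eq_mul_div, le_div_iff₀ (by positivity)]
        nlinarith [hMnn]
      have h3 : |f t - f x| ≤ 2*M := by
        calc |f t - f x| ≤ |f t| + |f x| := abs_sub _ _
          _ ≤ M + M := add_le_add (hfb t ht0.le) (hfb x hx0)
          _ = 2*M := by ring
      linarith
  -- the tail bound quantity
  set R := 22*C^2 + (18+8*B0)*C + 4*B0 + 2 with hR
  have hRnn : 0 ≤ R := by positivity
  have htend : Tendsto (fun n : ℕ => c * R / ((n:ℝ)-3)) atTop (𝓝 0) := by
    have h1 : Tendsto (fun n : ℕ => (n:ℝ)-3) atTop atTop :=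
      tendsto_atTop_add_const_right _ (-3) tendsto_natCast_atTop_atTop
    have h2 := h1.inv_tendsto_atTop.const_mul (c*R)
    simp only [mul_zero] at h2
    apply h2.congr
    intro n
    simp [div_eq_mul_inv]
  have hev : ∀ᶠ n : ℕ in atTop, c * R / ((n:ℝ)-3) < ε/2 :=
    htend.eventually_lt_const (by linarith)
  filter_upwards [hev, eventually_ge_atTop 4] with n hn1 hn2
  intro x hxA
  obtain ⟨ν, rfl⟩ : ∃ ν, n = ν + 4 := ⟨n - 4, by omega⟩
  have hx0 : (0:ℝ) ≤ x := hA hxA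
  have hxC' : x ≤ C := hxC x hxA
  set βv := a0 (ν+4) - a1 (ν+4) * (1+x) with hβv
  have hβb : |βv| ≤ B0 := hβ (ν+4) x hxA
  have hkey := key_est a0 a1 f M (ε/2) c ν hx0 (hrel (ν+4))
    (fun k => hpos (ν+4) k x hx0) hfm hfb (by linarith) hcnn (hpw x hxA)
  -- bound the E term
  set E := (((2*((ν:ℝ)+4)+14)*x^2 + (2*((ν:ℝ)+4)+10+8*βv)*x + 4*βv+2)
      / ((((ν:ℝ)+2))*(((ν:ℝ)+1)))) with hE
  have hnum : (2*((ν:ℝ)+4)+14)*x^2 + (2*((ν:ℝ)+4)+10+8*βv)*x + 4*βv+2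
      ≤ ((ν:ℝ)+2) * R := by
    have hb1 : βv ≤ B0 := (le_abs_self _).trans hβb
    have hx2 : x^2 ≤ C^2 := by nlinarith
    have hν0 : (0:ℝ) ≤ (ν:ℝ) := Nat.cast_nonneg ν
    rw [hR]
    nlinarith [mul_nonneg hν0 (sq_nonneg C), mul_nonneg hν0 hCnn,
      mul_nonneg hν0 hB0nn, mul_nonneg (mul_nonneg hν0 hB0nn) hCnn,
      mul_nonneg hB0nn hCnn, mul_nonneg hν0 (mul_nonneg hCnn hCnn)]
  have hEle : E ≤ R / ((ν:ℝ)+1) := by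
    rw [hE]
    rw [div_le_div_iff₀ (by positivity) (by positivity)]
    calc ((2*((ν:ℝ)+4)+14)*x^2 + (2*((ν:ℝ)+4)+10+8*βv)*x + 4*βv+2) * ((ν:ℝ)+1)
        ≤ (((ν:ℝ)+2) * R) * ((ν:ℝ)+1) := by
          apply mul_le_mul_of_nonneg_right hnum (by positivity)
      _ = R * (((ν:ℝ)+2)*(((ν:ℝ)+1))) := by ring
  have hcE : c * E ≤ c * R / ((ν:ℝ)+1) := by
    rw [div_eq_mul_inv, mul_assoc, ← div_eq_mul_inv]
    exact mul_le_mul_of_nonneg_left hEle hcnn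
  have hν1 : ((ν:ℝ)+4) - 3 = (ν:ℝ)+1 := by ring
  rw [Real.dist_eq, abs_sub_comm]
  have hlt : c * R / ((ν:ℝ)+1) < ε/2 := by
    have := hn1
    rw [show (((ν+4:ℕ)):ℝ) - 3 = (ν:ℝ)+1 by push_cast; ring] at this
    exact this
  calc |V1 a0 a1 (ν+4) f x - f x| ≤ ε/2 + c * E := hkey
    _ < ε := by linarith
end
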